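/- Persistence of small nonzero periodic points in the family f_θ: let θ₁ ∈ ℝ, let p ≥ 1 be an integer, let r > 0, and suppose there exists w₀ ∈ ℂ with w₀ ≠ 0, |w₀| < r and f_{θ₁}^p(w₀) = w₀. Then there exists δ > 0 such that for every θ ∈ ℝ with |θ − θ₁| < δ there exists w ∈ ℂ with w ≠ 0, |w| < r and f_θ^p(w) = w. -/

import Mathlib

/-- The quadratic polynomial `f_θ(z) = e^{2πiθ} z + z²`. -/
noncomputable def fTheta (θ : ℝ) (z : ℂ) : ℂ :=
  Complex.exp (2 * Real.pi * Complex.I * θ) * z + z ^ 2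

open Polynomial in
/-- The iterate of `fTheta θ` as a polynomial. -/
noncomputable def fThetaPoly (θ : ℝ) : ℕ → Polynomial ℂ
  | 0 => X
  | n + 1 => (C (Complex.exp (2 * Real.pi * Complex.I * θ)) * X + X ^ 2).comp (fThetaPoly θ n)

open Polynomial in
lemma fThetaPoly_eval (θ : ℝ) (n : ℕ) (z : ℂ) :
    (fThetaPoly θ n).eval z = (fTheta θ)^[n] z := by
  induction n with
  | zero => simp [fThetaPoly]
  | succ n ih =>
    rw [Function.iterate_succ_apply', fThetaPoly, eval_comp, ih]
    simp [fTheta]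

open Polynomial in
lemma fThetaPoly_monic (θ : ℝ) (n : ℕ) :
    (fThetaPoly θ n).Monic ∧ (fThetaPoly θ n).natDegree = 2 ^ n := by
  induction n with
  | zero => exact ⟨monic_X, natDegree_X⟩
  | succ n ih =>
    have hrw : C (Complex.exp (2 * Real.pi * Complex.I * θ)) * X + X ^ 2
        = X ^ 2 + C (Complex.exp (2 * Real.pi * Complex.I * θ)) * X := by ring
    have hdle : (C (Complex.exp (2 * Real.pi * Complex.I * θ)) * X).degree < 2 := by
      apply lt_of_le_of_lt (degree_mul_le _ _)
      calc (C (Complex.exp (2 * Real.pi * Complex.I * θ))).degree + X.degree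
          ≤ 0 + 1 := add_le_add degree_C_le degree_X_le
        _ < 2 := by norm_num
    have hbase : (C (Complex.exp (2 * Real.pi * Complex.I * θ)) * X + X ^ 2).Monic := by
      rw [hrw]; exact monic_X_pow_add hdle
    have hbd : (C (Complex.exp (2 * Real.pi * Complex.I * θ)) * X + X ^ 2).natDegree = 2 := by
      rw [add_comm]
      compute_degree!
    constructor
    · exact hbase.comp ih.1 (by rw [ih.2]; exact pow_ne_zero n (by norm_num))
    · rw [fThetaPoly, natDegree_comp, hbd, ih.2, pow_succ, mul_comm]

lemma continuous_fTheta_iter (n : ℕ) (w₀ : ℂ) :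
    Continuous fun θ : ℝ => (fTheta θ)^[n] w₀ := by
  induction n with
  | zero => simpa using continuous_const
  | succ n ih =>
    have : (fun θ : ℝ => (fTheta θ)^[n+1] w₀)
        = fun θ : ℝ => Complex.exp (2 * Real.pi * Complex.I * θ) * ((fTheta θ)^[n] w₀)
            + ((fTheta θ)^[n] w₀) ^ 2 := by
      funext θ; rw [Function.iterate_succ_apply']; rfl
    rw [this]
    fun_prop

lemma pow_card_le_prod_abs (ε : ℝ) (hε : 0 ≤ ε) (w₀ : ℂ) (s : Multiset ℂ)
    (h : ∀ a ∈ s, ε ≤ ‖w₀ - a‖) :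
    ε ^ Multiset.card s ≤ (s.map fun a => ‖w₀ - a‖).prod := by
  induction s using Multiset.induction with
  | empty => simp
  | cons a s ih =>
    simp only [Multiset.map_cons, Multiset.prod_cons, Multiset.card_cons, pow_succ]
    have h1 : ε ≤ ‖w₀ - a‖ := h a (Multiset.mem_cons_self a s)
    have h2 : ε ^ Multiset.card s ≤ ((s.map fun a => ‖w₀ - a‖)).prod :=
      ih fun b hb => h b (Multiset.mem_cons_of_mem hb)
    calc ε ^ Multiset.card s * ε
        ≤ ((s.map fun a => ‖w₀ - a‖)).prod * ‖w₀ - a‖ :=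
          mul_le_mul h2 h1 hε (le_trans (by positivity) h2)
      _ = _ := by ring

theorem small_periodic_points_persist (θ₁ : ℝ) (p : ℕ) (hp : 1 ≤ p) (r : ℝ) (hr : 0 < r)
    (w₀ : ℂ) (hw₀ : w₀ ≠ 0) (hw₀r : ‖w₀‖ < r) (hper : (fTheta θ₁)^[p] w₀ = w₀) :
    ∃ δ > 0, ∀ θ : ℝ, |θ - θ₁| < δ →
      ∃ w : ℂ, w ≠ 0 ∧ ‖w‖ < r ∧ (fTheta θ)^[p] w = w := by
  classical
  set N : ℕ := 2 ^ p with hN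
  set ε : ℝ := min (‖w₀‖) (r - ‖w₀‖) with hε
  have hεpos : 0 < ε := lt_min (norm_pos_iff.mpr hw₀) (by linarith)
  have htend : Filter.Tendsto (fun θ : ℝ => ‖(fTheta θ)^[p] w₀ - w₀‖)
      (nhds θ₁) (nhds 0) := by
    have : Filter.Tendsto (fun θ : ℝ => (fTheta θ)^[p] w₀ - w₀) (nhds θ₁) (nhds 0) := by
      have h0 : Filter.Tendsto (fun θ : ℝ => (fTheta θ)^[p] w₀ - w₀) (nhds θ₁)
          (nhds ((fTheta θ₁)^[p] w₀ - w₀)) :=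
        (((continuous_fTheta_iter p w₀).sub continuous_const).tendsto θ₁ :)
      rw [hper, sub_self] at h0
      exact h0
    simpa [Function.comp_def] using (continuous_norm.tendsto 0).comp this
  have hball : ∀ᶠ θ : ℝ in nhds θ₁, ‖(fTheta θ)^[p] w₀ - w₀‖ < ε ^ N := by
    have hpos : (0:ℝ) < ε ^ N := by positivity
    exact htend.eventually_lt_const hpos
  rw [Metric.eventually_nhds_iff] at hball
  obtain ⟨δ, hδpos, hδ⟩ := hball
  refine ⟨δ, hδpos, fun θ hθ => ?_⟩
  have hsmall : ‖(fTheta θ)^[p] w₀ - w₀‖ < ε ^ N := hδ (by simpa [Real.dist_eq] using hθ)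
  by_contra hno
  push_neg at hno
  set q : Polynomial ℂ := fThetaPoly θ p - Polynomial.X with hq
  have hmono := fThetaPoly_monic θ p
  have hNge : 2 ≤ N := by
    calc 2 = 2 ^ 1 := (pow_one 2).symm
    _ ≤ 2 ^ p := Nat.pow_le_pow_right (by norm_num) hp
  have hdegX : (Polynomial.X : Polynomial ℂ).degree < (fThetaPoly θ p).degree := by
    rw [Polynomial.degree_eq_natDegree hmono.1.ne_zero, hmono.2]
    calc (Polynomial.X : Polynomial ℂ).degree ≤ 1 := Polynomial.degree_X_le
    _ < ((2 ^ p : ℕ) : WithBot ℕ) := by exact_mod_cast (by omega : 1 < N)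
  have hqmonic : q.Monic := hmono.1.sub_of_left hdegX
  have hqdeg : q.natDegree = N := by
    have hdeg : q.degree = ((N : ℕ) : WithBot ℕ) := by
      rw [hq, Polynomial.degree_sub_eq_left_of_degree_lt hdegX,
        Polynomial.degree_eq_natDegree hmono.1.ne_zero, hmono.2]
    exact Polynomial.natDegree_eq_of_degree_eq_some hdeg
  have hqeval : ∀ z : ℂ, q.eval z = (fTheta θ)^[p] z - z := by
    intro z; simp [hq, fThetaPoly_eval]
  have hsplit : q.Splits := IsAlgClosed.splits q
  have hcard : Multiset.card q.roots = N := by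
    rw [← hqdeg]; exact (Polynomial.splits_iff_card_roots).1 hsplit
  have hfar : ∀ a ∈ q.roots, ε ≤ ‖w₀ - a‖ := by
    intro a ha
    by_contra hlt
    push_neg at hlt
    have haroot : q.eval a = 0 := Polynomial.isRoot_of_mem_roots ha
    have hfix : (fTheta θ)^[p] a = a := by
      have h := hqeval a; rw [haroot] at h; exact sub_eq_zero.mp h.symm
    have hane : a ≠ 0 := by
      intro h0
      rw [h0, sub_zero] at hlt
      exact absurd (min_le_left (‖w₀‖) (r - ‖w₀‖)) (not_le.mpr hlt)
    have habs : ‖a‖ < r := by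
      have h1 : ‖a‖ ≤ ‖w₀‖ + ‖w₀ - a‖ := by
        calc ‖a‖ = ‖w₀ - (w₀ - a)‖ := by ring_nf
        _ ≤ ‖w₀‖ + ‖w₀ - a‖ := norm_sub_le _ _
      have h2 : ‖w₀ - a‖ < r - ‖w₀‖ :=
        lt_of_lt_of_le hlt (min_le_right _ _)
      linarith
    exact hno a hane habs hfix
  have hevalprod : q.eval w₀ = (q.roots.map fun a => w₀ - a).prod := by
    have h := hsplit.eval_eq_prod_roots w₀
    rwa [hqmonic.leadingCoeff, one_mul] at h
  have habsprod : ‖((q.roots.map fun a => w₀ - a)).prod‖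
      = (q.roots.map fun a => ‖w₀ - a‖).prod := by
    exact (map_multiset_prod (normHom : ℂ →*₀ ℝ) _).trans (by rw [Multiset.map_map]; rfl)
  have hlow : ε ^ N ≤ ‖q.eval w₀‖ := by
    rw [hevalprod, habsprod, ← hcard]
    exact pow_card_le_prod_abs ε hεpos.le w₀ q.roots hfar
  rw [hqeval w₀] at hlow
  exact absurd hsmall (not_lt.mpr hlow)
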